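/- Let ψ ∈ Ω∞ and let κ ∈ 𝒦 have dominated growth with respect to ψ with constant C > 0, i.e. (ψ∘κ)'(t)/(ψ∘κ)(t) < C/t for all t > 0. Then for every x ∈ M₊(ψ) and every t > 0 at which φ_κ(x) is differentiable, t · (φ_κ(x))'(t) ≥ −C‖x‖_{M(ψ)}. -/

import Mathlib

open MeasureTheory Filter Set

noncomputable section

/-- `f` is bounded and continuous on `[0,∞)`, i.e. (the restriction of) `f`
belongs to `C_b([0,∞))`. -/
def IsCb (f : ℝ → ℝ) : Prop :=
  ContinuousOn f (Ici 0) ∧ ∃ M : ℝ, ∀ t ∈ Ici (0:ℝ), |f t| ≤ M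

/-- Bounded real sequences, i.e. elements of `ℓ∞(ℕ)`. -/
def IsBddSeq (a : ℕ → ℝ) : Prop := ∃ M : ℝ, ∀ n, |a n| ≤ M

/-- A Banach limit on `C_b([0,∞))`: a positive linear translation-invariant
functional with `L(1) = 1`.  (The underlying map is defined on all of `ℝ → ℝ`;
the axioms only refer to its values on bounded continuous functions on `[0,∞)`.) -/
structure BanachLimitR where
  toFun : (ℝ → ℝ) → ℝ
  map_add : ∀ f g : ℝ → ℝ, IsCb f → IsCb g →
    toFun (fun t => f t + g t) = toFun f + toFun g
  map_smul : ∀ (c : ℝ) (f : ℝ → ℝ), IsCb f → toFun (fun t => c * f t) = c * toFun f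
  pos : ∀ f : ℝ → ℝ, IsCb f → (∀ t ∈ Ici (0:ℝ), 0 ≤ f t) → 0 ≤ toFun f
  map_one : toFun (fun _ => 1) = 1
  shift_inv : ∀ f : ℝ → ℝ, IsCb f → ∀ s : ℝ, 0 ≤ s → toFun (fun t => f (t + s)) = toFun f

/-- A Banach limit on `ℓ∞(ℕ)`: a positive linear shift-invariant functional
with `L'(1) = 1`. -/
structure BanachLimitN where
  toFun : (ℕ → ℝ) → ℝ
  map_add : ∀ a b : ℕ → ℝ, IsBddSeq a → IsBddSeq b →
    toFun (fun n => a n + b n) = toFun a + toFun b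
  map_smul : ∀ (c : ℝ) (a : ℕ → ℝ), IsBddSeq a → toFun (fun n => c * a n) = c * toFun a
  pos : ∀ a : ℕ → ℝ, IsBddSeq a → (∀ n, 0 ≤ a n) → 0 ≤ toFun a
  map_one : toFun (fun _ => 1) = 1
  shift_inv : ∀ a : ℕ → ℝ, IsBddSeq a → toFun (fun n => a (n + 1)) = toFun a

/-- An element of `SC_b^*([0,∞))`: a positive linear functional on `C_b([0,∞))`
with `γ(1) = 1` vanishing on `C₀([0,∞))`. -/
structure SCbStar where
  toFun : (ℝ → ℝ) → ℝ
  map_add : ∀ f g : ℝ → ℝ, IsCb f → IsCb g →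
    toFun (fun t => f t + g t) = toFun f + toFun g
  map_smul : ∀ (c : ℝ) (f : ℝ → ℝ), IsCb f → toFun (fun t => c * f t) = c * toFun f
  pos : ∀ f : ℝ → ℝ, IsCb f → (∀ t ∈ Ici (0:ℝ), 0 ≤ f t) → 0 ≤ toFun f
  map_one : toFun (fun _ => 1) = 1
  vanish : ∀ f : ℝ → ℝ, IsCb f → Tendsto f atTop (nhds 0) → toFun f = 0

/-- A positive linear functional on `C_b([0,∞))`. -/
structure PosLinFunc where
  toFun : (ℝ → ℝ) → ℝ
  map_add : ∀ f g : ℝ → ℝ, IsCb f → IsCb g →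
    toFun (fun t => f t + g t) = toFun f + toFun g
  map_smul : ∀ (c : ℝ) (f : ℝ → ℝ), IsCb f → toFun (fun t => c * f t) = c * toFun f
  pos : ∀ f : ℝ → ℝ, IsCb f → (∀ t ∈ Ici (0:ℝ), 0 ≤ f t) → 0 ≤ toFun f

/-- `ψ ∈ Ω_∞`: concave on `[0,∞)`, nonnegative, `ψ(t) → 0` as `t → 0⁺` and
`ψ(t) → ∞` as `t → ∞`. -/
def OmegaInf (ψ : ℝ → ℝ) : Prop :=
  ConcaveOn ℝ (Ici 0) ψ ∧ (∀ t ∈ Ici (0:ℝ), 0 ≤ ψ t) ∧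
    Tendsto ψ (nhdsWithin 0 (Ioi 0)) (nhds 0) ∧ Tendsto ψ atTop atTop

/-- The decreasing rearrangement `x*` of a measurable function `x` on `[0,∞)`. -/
def decRearr (x : ℝ → ℝ) (t : ℝ) : ℝ :=
  sInf {s : ℝ | 0 ≤ s ∧ volume {u : ℝ | 0 ≤ u ∧ s < |x u|} ≤ ENNReal.ofReal t}

/-- The weighted mean function `φ(x)(t) = (1/ψ(t)) ∫₀ᵗ x*(s) ds`. -/
def phiW (ψ x : ℝ → ℝ) (t : ℝ) : ℝ := (∫ s in (0:ℝ)..t, decRearr x s) / ψ t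

/-- Membership in the Marcinkiewicz space `M(ψ)`. -/
def MemM (ψ x : ℝ → ℝ) : Prop :=
  Measurable x ∧ ∃ M : ℝ, ∀ t > (0:ℝ), phiW ψ x t ≤ M

/-- Membership in the positive cone `M₊(ψ)`. -/
def MemMplus (ψ x : ℝ → ℝ) : Prop := MemM ψ x ∧ ∀ t ∈ Ici (0:ℝ), 0 ≤ x t

/-- The Marcinkiewicz norm `‖x‖_{M(ψ)} = sup_{t>0} φ(x)(t)`. -/
def MNorm (ψ x : ℝ → ℝ) : ℝ := ⨆ t > (0:ℝ), phiW ψ x t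

/-- `κ ∈ 𝒦`: strictly increasing, invertible (as a map of `[0,∞)` onto itself),
differentiable, unbounded, with `κ(0) = 0`. -/
def MemK (κ : ℝ → ℝ) : Prop :=
  StrictMonoOn κ (Ici 0) ∧ κ 0 = 0 ∧ MapsTo κ (Ici 0) (Ici 0) ∧
    SurjOn κ (Ici 0) (Ici 0) ∧ DifferentiableOn ℝ κ (Ici 0) ∧ Tendsto κ atTop atTop

/-- `f_{L,κ}(x) = L(φ_κ(x))` for a Banach limit `L` on `C_b([0,∞))`; the function
`φ_κ(x)`, bounded and continuous on `(0,∞)`, is fed to `L` as `t ↦ φ_κ(x)(max t 1)`. -/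
def fL (L : BanachLimitR) (ψ κ x : ℝ → ℝ) : ℝ :=
  L.toFun fun t => phiW ψ x (κ (max t 1))

/-- `f_{L',κ}(x) = L'({φ(x)(κ(n))}ₙ)` for a Banach limit `L'` on `ℓ∞(ℕ)`. -/
def fLN (L' : BanachLimitN) (ψ κ x : ℝ → ℝ) : ℝ :=
  L'.toFun fun n => phiW ψ x (κ n)

/-- `κ` has restricted growth with respect to `ψ` (`κ ∈ R(ψ)`): the sequence
`ψ(κ(n))/ψ(κ(n+1))` is almost convergent to `1`. -/
def RestrictedGrowth (ψ κ : ℝ → ℝ) : Prop :=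
  ∀ L' : BanachLimitN, L'.toFun (fun n => ψ (κ n) / ψ (κ ((n:ℝ) + 1))) = 1

/-- `κ` has dominated growth with respect to `ψ` (`κ ∈ D(ψ)`):
`(ψ∘κ)'(t)/(ψ∘κ)(t) < C/t` for some `C > 0` and all `t > 0`. -/
def DominatedGrowth (ψ κ : ℝ → ℝ) : Prop :=
  (∀ t > (0:ℝ), DifferentiableAt ℝ (fun u => ψ (κ u)) t) ∧
    ∃ C > (0:ℝ), ∀ t > (0:ℝ), deriv (fun u => ψ (κ u)) t / ψ (κ t) < C / t

/-- `κ` is of exponential increase: `κ(t + C) > 2κ(t)` for some `C > 0` and all `t > 0`. -/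
def ExpIncrease (κ : ℝ → ℝ) : Prop := ∃ C > (0:ℝ), ∀ t > (0:ℝ), 2 * κ t < κ (t + C)

/-- The piecewise linear extension map `p : ℓ∞(ℕ) → C_b([0,∞))`. -/
def plExt (a : ℕ → ℝ) (t : ℝ) : ℝ :=
  a ⌊t⌋₊ + (a (⌊t⌋₊ + 1) - a ⌊t⌋₊) * (t - (⌊t⌋₊ : ℝ))

/-- The Cesàro mean `C(g)(μ) = (1/μ) ∫₀^μ g(s) ds` (with `C(g)(0) := g(0)`). -/
def cesaro (g : ℝ → ℝ) (μ : ℝ) : ℝ :=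
  if μ = 0 then g 0 else (∫ s in (0:ℝ)..μ, g s) / μ

/-- `M_k(g)(λ) = (1/k(λ)) ∫₀^λ g(s) k'(s) ds` (with `M_k(g)(0) := g(0)`). -/
def MkFun (k g : ℝ → ℝ) (l : ℝ) : ℝ :=
  if l = 0 then g 0 else (∫ s in (0:ℝ)..l, g s * deriv k s) / k l

/-- The Connes-Dixmier functional `τ_{γ,k}(x) = γ(M_k(φ(x)))`; the function
`M_k(φ(x))`, bounded and continuous on `(0,∞)`, is fed to `γ` as `t ↦ M_k(φ(x))(max t 1)`. -/
def tauCD (γ : SCbStar) (ψ k x : ℝ → ℝ) : ℝ :=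
  γ.toFun fun t => MkFun k (phiW ψ x) (max t 1)

/-- A set `Λ` of Banach limits has the Cesàro limit property if for each
`g ∈ C_b([0,∞))` both `liminf C(g)` and `limsup C(g)` are attained as values `L(g)`, `L ∈ Λ`. -/
def CesaroLimitProp (Λ : Set BanachLimitR) : Prop :=
  ∀ g : ℝ → ℝ, IsCb g →
    (∃ L ∈ Λ, L.toFun g = liminf (cesaro g) atTop) ∧
    (∃ L ∈ Λ, L.toFun g = limsup (cesaro g) atTop)

/-- Dilation invariance of an element of `SC_b^*([0,∞))`. -/
def DilationInvariant (ω : SCbStar) : Prop :=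
  ∀ g : ℝ → ℝ, IsCb g → ∀ a : ℝ, 0 < a → ω.toFun (fun t => g (a * t)) = ω.toFun g


lemma decRearr_nonneg (x : ℝ → ℝ) (s : ℝ) : 0 ≤ decRearr x s :=
  Real.sInf_nonneg (fun _ hy => hy.1)

lemma omegaInf_pos {ψ : ℝ → ℝ} (hψ : OmegaInf ψ) {a : ℝ} (ha : 0 < a) : 0 < ψ a := by
  obtain ⟨hconc, hnn, -, htop⟩ := hψ
  obtain ⟨b, hb1, hb2⟩ := ((htop.eventually_gt_atTop 0).and (eventually_gt_atTop a)).exists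
  have hb0 : 0 < b := ha.trans hb2
  have hab1 : a / b ≤ 1 := (div_le_one hb0).mpr hb2.le
  have key := hconc.2 (self_mem_Ici) (show b ∈ Ici (0:ℝ) from hb0.le)
    (show (0:ℝ) ≤ 1 - a/b by linarith)
    (show (0:ℝ) ≤ a/b by positivity) (by ring)
  have hab : (1 - a/b) • (0:ℝ) + (a/b) • b = a := by rw [smul_eq_mul, smul_eq_mul]; field_simp; ring
  rw [hab] at key
  have h0 : 0 ≤ ψ 0 := hnn 0 (mem_Ici.mpr le_rfl)
  have hfrac : 0 < (a/b) * ψ b := mul_pos (by positivity) hb1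
  simp only [smul_eq_mul] at key
  nlinarith [mul_nonneg (show (0:ℝ) ≤ 1 - a/b by linarith) h0]

/-- if `κ` has dominated growth with respect to `ψ` with constant
`C`, then `t·(φ_κ(x))'(t) ≥ −C‖x‖_{M(ψ)}` at every point of differentiability. -/
theorem deriv_phiKappa_lower_bound (ψ κ x : ℝ → ℝ) (hψ : OmegaInf ψ) (hκ : MemK κ)
    (C : ℝ) (hC : 0 < C)
    (hdiff : ∀ t > (0:ℝ), DifferentiableAt ℝ (fun u => ψ (κ u)) t)
    (hdom : ∀ t > (0:ℝ), deriv (fun u => ψ (κ u)) t / ψ (κ t) < C / t)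
    (hx : MemMplus ψ x) (t : ℝ) (ht : 0 < t)
    (hd : DifferentiableAt ℝ (fun u => phiW ψ x (κ u)) t) :
    -(C * MNorm ψ x) ≤ t * deriv (fun u => phiW ψ x (κ u)) t := by
  classical
  obtain ⟨⟨hxm, M, hM⟩, hx0⟩ := hx
  set f : ℝ → ℝ := fun u => phiW ψ x (κ u) with hfdef
  set G : ℝ → ℝ := fun u => ∫ s in (0:ℝ)..κ u, decRearr x s with hGdef
  set P : ℝ → ℝ := fun u => ψ (κ u) with hPdef
  have hfGP : ∀ u, f u = G u / P u := fun u => rfl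
  have hκnn : ∀ u : ℝ, 0 ≤ u → 0 ≤ κ u := fun u hu => hκ.2.2.1 hu
  have hκmono : MonotoneOn κ (Ici 0) := hκ.1.monotoneOn
  have hκt : 0 < κ t := by
    have := hκ.1 (self_mem_Ici) (mem_Ici.mpr ht.le) ht
    rwa [hκ.2.1] at this
  have hPt : 0 < P t := omegaInf_pos hψ hκt
  have hGt0 : 0 ≤ G t := intervalIntegral.integral_nonneg (hκnn t ht.le)
    (fun u _ => decRearr_nonneg x u)
  have hft0 : 0 ≤ f t := by rw [hfGP]; exact div_nonneg hGt0 hPt.le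
  -- φ(κ t) ≤ MNorm
  have hbdd : BddAbove (range fun u => ⨆ _ : u > (0:ℝ), phiW ψ x u) := by
    refine ⟨max M 0, ?_⟩
    rintro y ⟨u, rfl⟩
    show (⨆ _ : u > (0:ℝ), phiW ψ x u) ≤ max M 0
    by_cases hu : u > 0
    · rw [ciSup_pos hu]; exact le_max_of_le_left (hM u hu)
    · rw [ciSup_neg hu, Real.sSup_empty]; exact le_max_right _ _
  have hφle : f t ≤ MNorm ψ x := by
    have h1 : (⨆ _ : κ t > (0:ℝ), phiW ψ x (κ t)) ≤ MNorm ψ x := le_ciSup hbdd (κ t)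
    rwa [ciSup_pos hκt] at h1
  have hN0 : 0 ≤ MNorm ψ x := hft0.trans hφle
  have hPdiff : DifferentiableAt ℝ P t := hdiff t ht
  have hslopef : Tendsto (slope f t) (nhdsWithin t (Ioi t)) (nhds (deriv f t)) :=
    (hasDerivAt_iff_tendsto_slope.mp hd.hasDerivAt).mono_left
      (nhdsWithin_mono t (fun s hs => ne_of_gt hs))
  by_cases hInt : ∃ s > t, IntervalIntegrable (decRearr x) volume 0 (κ s)
  · -- integrable case
    obtain ⟨s₀, hs₀t, hs₀I⟩ := hInt
    set h : ℝ → ℝ := fun u => G t / P u with hhdef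
    have hs₀0 : (0:ℝ) ≤ s₀ := (ht.trans hs₀t).le
    have hκs₀ : (0:ℝ) ≤ κ s₀ := hκnn s₀ hs₀0
    have hh : HasDerivAt h ((0 * P t - G t * deriv P t) / (P t)^2) t :=
      (hasDerivAt_const t (G t)).div hPdiff.hasDerivAt hPt.ne'
    have hPev : ∀ᶠ s in nhdsWithin t (Ioi t), 0 < P s :=
      (hPdiff.continuousAt.eventually (eventually_gt_nhds hPt)).filter_mono
        nhdsWithin_le_nhds
    have hle : slope h t ≤ᶠ[nhdsWithin t (Ioi t)] slope f t := by
      filter_upwards [Ioo_mem_nhdsGT_of_mem (show t ∈ Ico t s₀ from ⟨le_rfl, hs₀t⟩), hPev]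
        with s hs hPs
      have hst : t < s := hs.1
      have hκts : κ t ≤ κ s := hκmono (mem_Ici.mpr ht.le)
        (mem_Ici.mpr (ht.trans hst).le) hst.le
      have hκss₀ : κ s ≤ κ s₀ := hκmono (mem_Ici.mpr (ht.trans hst).le)
        (mem_Ici.mpr hs₀0) hs.2.le
      have hsub : ∀ a b : ℝ, 0 ≤ a → a ≤ b → b ≤ κ s₀ →
          IntervalIntegrable (decRearr x) volume a b := by
        intro a b ha hab hb
        refine hs₀I.mono_set ?_
        rw [uIcc_of_le hab, uIcc_of_le hκs₀]
        exact Icc_subset_Icc ha hb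
      have hI0t : IntervalIntegrable (decRearr x) volume 0 (κ t) :=
        hsub 0 (κ t) le_rfl (hκnn t ht.le) (hκts.trans hκss₀)
      have hIts : IntervalIntegrable (decRearr x) volume (κ t) (κ s) :=
        hsub (κ t) (κ s) (hκnn t ht.le) hκts hκss₀
      have hadd := intervalIntegral.integral_add_adjacent_intervals hI0t hIts
      have hnn : (0:ℝ) ≤ ∫ u in (κ t)..(κ s), decRearr x u :=
        intervalIntegral.integral_nonneg hκts (fun u _ => decRearr_nonneg x u)
      have hGs : G t ≤ G s := by
        simp only [hGdef]
        rw [← hadd]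
        linarith
      rw [slope_def_field, slope_def_field]
      have hnum : h s - h t ≤ f s - f t := by
        have hht : h t = f t := (hfGP t).symm
        have : h s ≤ f s := by
          rw [hfGP]
          show G t / P s ≤ G s / P s
          gcongr
        linarith
      have hden : (0:ℝ) < s - t := by linarith
      gcongr
    have hslopeh : Tendsto (slope h t) (nhdsWithin t (Ioi t))
        (nhds ((0 * P t - G t * deriv P t) / (P t)^2)) :=
      (hasDerivAt_iff_tendsto_slope.mp hh).mono_left
        (nhdsWithin_mono t (fun s hs => ne_of_gt hs))
    have hge : (0 * P t - G t * deriv P t) / (P t)^2 ≤ deriv f t :=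
      le_of_tendsto_of_tendsto hslopeh hslopef hle
    -- arithmetic
    have hdomt := hdom t ht
    set r : ℝ := deriv P t / P t with hrdef
    have hr : r < C / t := hdomt
    have heq : (0 * P t - G t * deriv P t) / (P t)^2 = -(f t * r) := by
      rw [hfGP, hrdef]
      field_simp
      ring_nf
    rw [heq] at hge
    have hmul : t * (f t * r) ≤ C * MNorm ψ x := by
      rcases le_or_gt r 0 with hr0 | hr0
      · have h1 : f t * r ≤ 0 := mul_nonpos_of_nonneg_of_nonpos hft0 hr0
        nlinarith
      · have h1 : f t * r ≤ MNorm ψ x * (C / t) :=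
          mul_le_mul hφle hr.le hr0.le hN0
        have h2 := mul_le_mul_of_nonneg_left h1 ht.le
        have h3 : t * (MNorm ψ x * (C / t)) = C * MNorm ψ x := by
          field_simp
        linarith
    have h4 := mul_le_mul_of_nonneg_left hge ht.le
    have h5 : t * -(f t * r) = -(t * (f t * r)) := by ring
    linarith
  · -- non-integrable case
    push_neg at hInt
    have hfs0 : ∀ s, t < s → f s = 0 := by
      intro s hs
      have hG : G s = 0 := intervalIntegral.integral_undef (hInt s hs)
      rw [hfGP, hG, zero_div]
    rcases hft0.eq_or_lt with heq | hpos
    · -- f t = 0 : slope is 0 to the right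
      have hzero : Tendsto (slope f t) (nhdsWithin t (Ioi t)) (nhds 0) := by
        apply Tendsto.congr' _ tendsto_const_nhds
        filter_upwards [self_mem_nhdsWithin] with s hs
        rw [slope_def_field, hfs0 s hs, ← heq]
        simp
      have hder0 : deriv f t = 0 := tendsto_nhds_unique hslopef hzero
      rw [hder0, mul_zero]
      have := mul_nonneg hC.le hN0
      linarith
    · -- f t > 0 : slope → -∞, contradicting differentiability
      exfalso
      have h1 : Tendsto (fun s => s - t) (nhdsWithin t (Ioi t)) (nhdsWithin 0 (Ioi 0)) := by
        apply tendsto_nhdsWithin_of_tendsto_nhds_of_eventually_within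
        · have : Tendsto (fun s : ℝ => s - t) (nhds t) (nhds (t - t)) :=
            (continuous_id.sub continuous_const).tendsto t
          simpa using this.mono_left nhdsWithin_le_nhds
        · filter_upwards [self_mem_nhdsWithin] with s hs
          exact sub_pos.mpr (show t < s from hs)
      have h2 : Tendsto (fun s : ℝ => (s - t)⁻¹) (nhdsWithin t (Ioi t)) atTop :=
        tendsto_inv_nhdsGT_zero.comp h1
      have h3 : Tendsto (fun s : ℝ => f t * (s - t)⁻¹) (nhdsWithin t (Ioi t)) atTop :=
        h2.const_mul_atTop hpos
      have h4 : Tendsto (fun s : ℝ => -(f t * (s - t)⁻¹)) (nhdsWithin t (Ioi t)) atBot :=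
        tendsto_neg_atBot_iff.mpr h3
      have h5 : Tendsto (slope f t) (nhdsWithin t (Ioi t)) atBot := by
        apply Tendsto.congr' _ h4
        filter_upwards [self_mem_nhdsWithin] with s hs
        rw [slope_def_field, hfs0 s hs]
        field_simp
        ring
      exact not_tendsto_nhds_of_tendsto_atBot h5 _ hslopef
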